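/- On a finite tree graph with N ≥ 2 nodes and r > 0, a detailed-balance stationary state is linearly stable if and only if every edge is a dissensus edge (|x*_i − x*_j| = √r for all edges); any stationary state with at least one consensus edge has a Jacobian with a positive eigenvalue. -/

import Mathlib

open Finset Matrix Polynomial
open scoped Classical

/-- Right-hand side of the dynamics `dx_i/dt = Σ_{j~i} (r(x_i-x_j) - (x_i-x_j)^3)`. -/
noncomputable def rhs {N : ℕ} (G : SimpleGraph (Fin N)) (r : ℝ) (x : Fin N → ℝ) (i : Fin N) : ℝ :=
  ∑ j ∈ G.neighborFinset i, (r * (x i - x j) - (x i - x j) ^ 3)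

/-- Graph Laplacian matrix. -/
noncomputable def lap {N : ℕ} (G : SimpleGraph (Fin N)) : Matrix (Fin N) (Fin N) ℝ :=
  fun i j => if i = j then (G.degree i : ℝ) else if G.Adj i j then -1 else 0

/-- Laplacian of the subgraph of consensus edges (edges with `x i = x j`). -/
noncomputable def lapEq {N : ℕ} (G : SimpleGraph (Fin N)) (x : Fin N → ℝ) :
    Matrix (Fin N) (Fin N) ℝ :=
  fun i j => if i = j then (((G.neighborFinset i).filter (fun k => x i = x k)).card : ℝ)
    else if G.Adj i j ∧ x i = x j then -1 else 0

/-- Laplacian of the subgraph of dissensus edges (edges with `x i ≠ x j`). -/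
noncomputable def lapNe {N : ℕ} (G : SimpleGraph (Fin N)) (x : Fin N → ℝ) :
    Matrix (Fin N) (Fin N) ℝ :=
  fun i j => if i = j then (((G.neighborFinset i).filter (fun k => x i ≠ x k)).card : ℝ)
    else if G.Adj i j ∧ x i ≠ x j then -1 else 0

/-- `Qp` is the Moore–Penrose pseudoinverse of `Q`. -/
def IsMP {N : ℕ} (Q Qp : Matrix (Fin N) (Fin N) ℝ) : Prop :=
  Q * Qp * Q = Q ∧ Qp * Q * Qp = Qp ∧ (Q * Qp)ᵀ = Q * Qp ∧ (Qp * Q)ᵀ = Qp * Q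

/-- The indicator difference vector `e_i - e_j`. -/
noncomputable def ev {N : ℕ} (i j : Fin N) : Fin N → ℝ := Pi.single i 1 - Pi.single j 1

/-- Effective resistance `ω_ij = (e_i-e_j)ᵀ Q⁺ (e_i-e_j)` given a pseudoinverse `Qp` of `Q`. -/
noncomputable def effRes {N : ℕ} (Qp : Matrix (Fin N) (Fin N) ℝ) (i j : Fin N) : ℝ :=
  ev i j ⬝ᵥ (Qp *ᵥ ev i j)

/-- A detailed-balance state: every edge difference lies in `{0, √r, -√r}`. -/
def DetailedBalance {N : ℕ} (G : SimpleGraph (Fin N)) (r : ℝ) (x : Fin N → ℝ) : Prop :=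
  ∀ i j, G.Adj i j → (x i - x j = 0 ∨ x i - x j = Real.sqrt r ∨ x i - x j = - Real.sqrt r)

/-- `M` is negative definite on the subspace orthogonal to the constant vector. -/
def NegDefOrth {N : ℕ} (M : Matrix (Fin N) (Fin N) ℝ) : Prop :=
  ∀ z : Fin N → ℝ, z ≠ 0 → ∑ k, z k = 0 → z ⬝ᵥ (M *ᵥ z) < 0

/-- `M` has a positive eigenvalue. -/
def HasPosEig {N : ℕ} (M : Matrix (Fin N) (Fin N) ℝ) : Prop :=
  ∃ (μ : ℝ) (z : Fin N → ℝ), 0 < μ ∧ z ≠ 0 ∧ M *ᵥ z = μ • z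

/-- The Jacobian of the dynamics `rhs` at a state `x`, defined entrywise via partial
derivatives. -/
noncomputable def jac {N : ℕ} (G : SimpleGraph (Fin N)) (r : ℝ) (x : Fin N → ℝ) :
    Matrix (Fin N) (Fin N) ℝ :=
  fun i j => deriv (fun t => rhs G r (Function.update x j t) i) (x j)

/-- The solution `α(t) = α₀ (α₀² - (α₀²-1) e^{-2μrt})^{-1/2}` of the Bernoulli ODE. -/
noncomputable def alph (a0 mu r : ℝ) (t : ℝ) : ℝ :=
  a0 / Real.sqrt (a0 ^ 2 - (a0 ^ 2 - 1) * Real.exp (-(2 * mu * r * t)))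

/-! ### Auxiliary lemmas -/

/-- Quadratic form of a generalized (sub-)Laplacian. -/
lemma stmt15_quad_gen {N : ℕ} (G : SimpleGraph (Fin N)) (p : Fin N → Fin N → Prop)
    (M : Matrix (Fin N) (Fin N) ℝ)
    (hdiag : ∀ a, M a a = (((G.neighborFinset a).filter (fun k => p a k)).card : ℝ))
    (hoff : ∀ a b, a ≠ b → M a b = if G.Adj a b ∧ p a b then -1 else 0)
    (z : Fin N → ℝ) :
    z ⬝ᵥ (M *ᵥ z) = ∑ a, ∑ b, if G.Adj a b ∧ p a b then z a * (z a - z b) else 0 := by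
  have inner : ∀ a, (M *ᵥ z) a = ∑ b, if G.Adj a b ∧ p a b then z a - z b else 0 := by
    intro a
    have h1 : ∀ b, M a b * z b =
        (if a = b then ((((G.neighborFinset a).filter (fun k => p a k)).card : ℝ)) * z a else 0)
        + (if G.Adj a b ∧ p a b then -(z b) else 0) := by
      intro b
      by_cases hab : a = b
      · subst hab
        rw [hdiag a, if_pos rfl, if_neg (fun h => G.irrefl h.1)]
        ring
      · rw [hoff a b hab, if_neg hab]
        split_ifs <;> ring
    have h2 : ((((G.neighborFinset a).filter (fun k => p a k)).card : ℝ)) * z a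
        = ∑ b, if G.Adj a b ∧ p a b then z a else 0 := by
      rw [← Finset.sum_filter]
      have : Finset.univ.filter (fun b => G.Adj a b ∧ p a b)
          = (G.neighborFinset a).filter (fun k => p a k) := by
        ext b
        simp [SimpleGraph.mem_neighborFinset, and_assoc]
      rw [this, Finset.sum_const, nsmul_eq_mul]
    calc (M *ᵥ z) a = ∑ b, M a b * z b := rfl
      _ = ∑ b, ((if a = b then ((((G.neighborFinset a).filter (fun k => p a k)).card : ℝ)) * z a
              else 0) + (if G.Adj a b ∧ p a b then -(z b) else 0)) :=
            Finset.sum_congr rfl fun b _ => h1 b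
      _ = ((((G.neighborFinset a).filter (fun k => p a k)).card : ℝ)) * z a
            + ∑ b, (if G.Adj a b ∧ p a b then -(z b) else 0) := by
            rw [Finset.sum_add_distrib, Finset.sum_ite_eq]
            simp
      _ = ∑ b, ((if G.Adj a b ∧ p a b then z a else 0)
            + (if G.Adj a b ∧ p a b then -(z b) else 0)) := by
            rw [Finset.sum_add_distrib, h2]
      _ = ∑ b, if G.Adj a b ∧ p a b then z a - z b else 0 := by
            refine Finset.sum_congr rfl fun b _ => ?_
            split_ifs <;> ring
  calc z ⬝ᵥ (M *ᵥ z) = ∑ a, z a * (M *ᵥ z) a := rfl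
    _ = ∑ a, ∑ b, if G.Adj a b ∧ p a b then z a * (z a - z b) else 0 := by
        refine Finset.sum_congr rfl fun a _ => ?_
        rw [inner a, Finset.mul_sum]
        refine Finset.sum_congr rfl fun b _ => ?_
        split_ifs <;> ring

/-- Symmetrization of the quadratic form into a sum of squares. -/
lemma stmt15_sym_quad {N : ℕ} (G : SimpleGraph (Fin N)) (p : Fin N → Fin N → Prop)
    (hp : ∀ a b, p a b → p b a) (z : Fin N → ℝ) :
    (∑ a, ∑ b, if G.Adj a b ∧ p a b then z a * (z a - z b) else 0) * 2
      = ∑ a, ∑ b, if G.Adj a b ∧ p a b then (z a - z b) ^ 2 else 0 := by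
  have hswap : (∑ a, ∑ b, if G.Adj a b ∧ p a b then z a * (z a - z b) else 0)
      = ∑ a, ∑ b, if G.Adj a b ∧ p a b then z b * (z b - z a) else 0 := by
    rw [Finset.sum_comm]
    refine Finset.sum_congr rfl fun a _ => Finset.sum_congr rfl fun b _ => ?_
    refine if_congr ?_ rfl rfl
    exact ⟨fun h => ⟨h.1.symm, hp _ _ h.2⟩, fun h => ⟨h.1.symm, hp _ _ h.2⟩⟩
  calc (∑ a, ∑ b, if G.Adj a b ∧ p a b then z a * (z a - z b) else 0) * 2
      = (∑ a, ∑ b, if G.Adj a b ∧ p a b then z a * (z a - z b) else 0)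
        + (∑ a, ∑ b, if G.Adj a b ∧ p a b then z b * (z b - z a) else 0) := by
        rw [← hswap]; ring
    _ = ∑ a, ∑ b, if G.Adj a b ∧ p a b then (z a - z b) ^ 2 else 0 := by
        rw [← Finset.sum_add_distrib]
        refine Finset.sum_congr rfl fun a _ => ?_
        rw [← Finset.sum_add_distrib]
        refine Finset.sum_congr rfl fun b _ => ?_
        split_ifs <;> ring

lemma stmt15_ite_irrel {α : Sort*} {c : Prop} (h1 h2 : Decidable c) (a b : α) :
    @ite _ c h1 a b = @ite _ c h2 a b := by
  cases Subsingleton.elim h1 h2; rfl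

/-- Doubled quadratic form of the consensus sub-Laplacian as a sum of squares. -/
lemma stmt15_quad_eq {N : ℕ} (G : SimpleGraph (Fin N)) (x z : Fin N → ℝ) :
    (z ⬝ᵥ (lapEq G x *ᵥ z)) * 2
      = ∑ a, ∑ b, if G.Adj a b ∧ x a = x b then (z a - z b) ^ 2 else 0 := by
  rw [stmt15_quad_gen G (fun a b => x a = x b) (lapEq G x)
    (fun a => by simp only [lapEq, eq_self_iff_true, if_true]; try congr!)
    (fun a b h => by simp only [lapEq, if_neg h]; try exact stmt15_ite_irrel _ _ _ _) z,
    stmt15_sym_quad G (fun a b => x a = x b) (fun a b h => h.symm) z]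
  all_goals exact Finset.sum_congr rfl fun a _ => Finset.sum_congr rfl fun b _ =>
    stmt15_ite_irrel _ _ _ _

/-- Doubled quadratic form of the dissensus sub-Laplacian as a sum of squares. -/
lemma stmt15_quad_ne {N : ℕ} (G : SimpleGraph (Fin N)) (x z : Fin N → ℝ) :
    (z ⬝ᵥ (lapNe G x *ᵥ z)) * 2
      = ∑ a, ∑ b, if G.Adj a b ∧ x a ≠ x b then (z a - z b) ^ 2 else 0 := by
  rw [stmt15_quad_gen G (fun a b => x a ≠ x b) (lapNe G x)
    (fun a => by simp only [lapNe, eq_self_iff_true, if_true]; try congr!)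
    (fun a b h => by simp only [lapNe, if_neg h]; try exact stmt15_ite_irrel _ _ _ _) z,
    stmt15_sym_quad G (fun a b => x a ≠ x b) (fun a b h e => h e.symm) z]
  all_goals exact Finset.sum_congr rfl fun a _ => Finset.sum_congr rfl fun b _ =>
    stmt15_ite_irrel _ _ _ _

/-- A symmetric real matrix whose quadratic form is positive somewhere has a positive
eigenvalue. -/
lemma stmt15_pos_eig_of_pos_form {N : ℕ} (M : Matrix (Fin N) (Fin N) ℝ)
    (hsym : Mᵀ = M) (z : Fin N → ℝ) (hz : 0 < z ⬝ᵥ (M *ᵥ z)) : HasPosEig M := by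
  have hherm : (-M).IsHermitian := by
    show (-M)ᴴ = -M
    ext a b
    simp only [conjTranspose_apply, Matrix.neg_apply, star_trivial]
    rw [show M b a = Mᵀ a b from rfl, hsym]
  by_cases hall : ∀ k, 0 ≤ hherm.eigenvalues k
  · exfalso
    have hps := hherm.posSemidef_iff_eigenvalues_nonneg.mpr hall
    have h2 := hps.dotProduct_mulVec_nonneg z
    simp only [star_trivial, RCLike.re_to_real, neg_mulVec, dotProduct_neg] at h2
    linarith
  · push_neg at hall
    obtain ⟨k, hk⟩ := hall
    refine ⟨-(hherm.eigenvalues k), hherm.eigenvectorBasis k, by linarith, ?_, ?_⟩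
    · have hne := hherm.eigenvectorBasis.orthonormal.ne_zero k
      intro h
      apply hne
      ext l
      exact congrFun h l
    · have hm := hherm.mulVec_eigenvectorBasis k
      rw [neg_mulVec, neg_eq_iff_eq_neg] at hm
      rw [neg_smul]
      exact hm

/-- The cut indicator vector of a tree edge. -/
lemma stmt15_exists_indicator {N : ℕ} (G : SimpleGraph (Fin N)) (hT : G.IsTree) {i j : Fin N}
    (hij : G.Adj i j) :
    ∃ z : Fin N → ℝ, z i = 1 ∧ z j = 0 ∧
      ∀ a b, G.Adj a b → s(a, b) ≠ s(i, j) → z a = z b := by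
  set G' := G \ SimpleGraph.fromEdgeSet {s(i, j)} with hG'
  refine ⟨fun k => if G'.Reachable k i then 1 else 0, if_pos (SimpleGraph.Reachable.refl i), ?_, ?_⟩
  · have hbr : G.IsBridge s(i, j) :=
      SimpleGraph.isAcyclic_iff_forall_adj_isBridge.mp hT.IsAcyclic hij
    rw [SimpleGraph.isBridge_iff] at hbr
    exact if_neg (fun h => hbr h.symm)
  · intro a b hab hne
    have hadj : G'.Adj a b := by
      rw [hG', SimpleGraph.sdiff_adj]
      refine ⟨hab, fun h => ?_⟩
      rw [SimpleGraph.fromEdgeSet_adj] at h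
      exact hne (Set.mem_singleton_iff.mp h.1)
    exact if_congr ⟨fun h => hadj.symm.reachable.trans h, fun h => hadj.reachable.trans h⟩ rfl rfl

/-- A function constant on edges of a connected graph is constant. -/
lemma stmt15_const_of_edges {N : ℕ} (G : SimpleGraph (Fin N)) (hc : G.Connected)
    (z : Fin N → ℝ) (hz : ∀ a b, G.Adj a b → z a = z b) : ∀ a b : Fin N, z a = z b := by
  intro a b
  obtain ⟨w⟩ := hc.preconnected a b
  induction w with
  | nil => rfl
  | cons h p ih => exact (hz _ _ h).trans ih

/-- Values of the sums of squares at a cut indicator vector of a consensus edge. -/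
lemma stmt15_consensus_vals {N : ℕ} (G : SimpleGraph (Fin N)) (x : Fin N → ℝ) {i j : Fin N}
    (hij : G.Adj i j) (heq : x i = x j) (z : Fin N → ℝ) (hz1 : z i - z j = 1)
    (hedge : ∀ a b, G.Adj a b → s(a, b) ≠ s(i, j) → z a = z b) :
    (∑ a, ∑ b, if G.Adj a b ∧ x a = x b then (z a - z b) ^ 2 else 0) = 2 ∧
    (∑ a, ∑ b, if G.Adj a b ∧ x a ≠ x b then (z a - z b) ^ 2 else 0) = 0 := by
  have hzz : ∀ a b, G.Adj a b → s(a, b) ≠ s(i, j) → (z a - z b) ^ 2 = 0 := by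
    intro a b hab hne
    rw [hedge a b hab hne]
    ring
  constructor
  · have hterm : ∀ a b : Fin N, (if G.Adj a b ∧ x a = x b then (z a - z b) ^ 2 else 0)
        = (if a = i ∧ b = j then 1 else 0) + (if a = j ∧ b = i then 1 else 0) := by
      intro a b
      by_cases h1 : a = i ∧ b = j
      · obtain ⟨rfl, rfl⟩ := h1
        rw [if_pos ⟨hij, heq⟩, if_pos ⟨rfl, rfl⟩, if_neg (fun hc => G.ne_of_adj hij hc.1)]
        rw [hz1]; norm_num
      · by_cases h2 : a = j ∧ b = i
        · obtain ⟨rfl, rfl⟩ := h2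
          rw [if_pos ⟨hij.symm, heq.symm⟩, if_neg h1, if_pos ⟨rfl, rfl⟩]
          rw [show z a - z b = -(z b - z a) by ring, hz1]
          norm_num
        · rw [if_neg h1, if_neg h2, add_zero]
          split_ifs with h
          · refine hzz a b h.1 ?_
            intro hs
            rcases Sym2.eq_iff.mp hs with ⟨rfl, rfl⟩ | ⟨rfl, rfl⟩
            · exact h1 ⟨rfl, rfl⟩
            · exact h2 ⟨rfl, rfl⟩
          · rfl
    rw [Finset.sum_congr rfl fun a _ => Finset.sum_congr rfl fun b _ => hterm a b]
    have hij' : i ≠ j := hij.ne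
    simp only [Finset.sum_add_distrib, ite_and, Finset.sum_ite_eq, Finset.sum_ite_eq',
      Finset.mem_univ, if_pos]
    try norm_num
  · refine Finset.sum_eq_zero fun a _ => Finset.sum_eq_zero fun b _ => ?_
    split_ifs with h
    · refine hzz a b h.1 ?_
      intro hs
      rw [Sym2.eq_iff] at hs
      rcases hs with ⟨rfl, rfl⟩ | ⟨rfl, rfl⟩
      · exact h.2 heq
      · exact h.2 heq.symm
    · rfl

/-- Symmetry of the stability matrix. -/
lemma stmt15_M_symm {N : ℕ} (G : SimpleGraph (Fin N)) (x : Fin N → ℝ) (r : ℝ) :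
    (r • (lapEq G x - (2 : ℝ) • lapNe G x))ᵀ = r • (lapEq G x - (2 : ℝ) • lapNe G x) := by
  have h1 : (lapEq G x)ᵀ = lapEq G x := by
    ext a b
    simp only [transpose_apply, lapEq]
    by_cases h : a = b
    · subst h; rfl
    · rw [if_neg (fun hh => h hh.symm), if_neg h]
      exact if_congr ⟨fun hh => ⟨hh.1.symm, hh.2.symm⟩, fun hh => ⟨hh.1.symm, hh.2.symm⟩⟩ rfl rfl
  have h2 : (lapNe G x)ᵀ = lapNe G x := by
    ext a b
    simp only [transpose_apply, lapNe]
    by_cases h : a = b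
    · subst h; rfl
    · rw [if_neg (fun hh => h hh.symm), if_neg h]
      exact if_congr ⟨fun hh => ⟨hh.1.symm, fun e => hh.2 e.symm⟩,
        fun hh => ⟨hh.1.symm, fun e => hh.2 e.symm⟩⟩ rfl rfl
  rw [transpose_smul, transpose_sub, transpose_smul, h1, h2]

/-- on a tree (`N ≥ 2`), a detailed-balance stationary state is linearly
stable iff all edges are dissensus edges; any consensus edge yields a positive eigenvalue
of the Jacobian. -/
theorem stmt_15 {N : ℕ} (hN : 2 ≤ N) (G : SimpleGraph (Fin N)) (hT : G.IsTree)
    (r : ℝ) (hr : 0 < r) (x : Fin N → ℝ) (hx : DetailedBalance G r x) :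
    (NegDefOrth (r • (lapEq G x - (2 : ℝ) • lapNe G x)) ↔
      ∀ i j, G.Adj i j → x i ≠ x j) ∧
    ((∃ i j, G.Adj i j ∧ x i = x j) →
      HasPosEig (r • (lapEq G x - (2 : ℝ) • lapNe G x))) := by
  have hNR : (0 : ℝ) < (N : ℝ) := by
    have : 0 < N := by omega
    exact_mod_cast this
  -- the quadratic form
  have hform : ∀ z : Fin N → ℝ,
      2 * (z ⬝ᵥ ((r • (lapEq G x - (2 : ℝ) • lapNe G x)) *ᵥ z)) =
        r * ((∑ a, ∑ b, if G.Adj a b ∧ x a = x b then (z a - z b) ^ 2 else 0)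
          - 2 * (∑ a, ∑ b, if G.Adj a b ∧ x a ≠ x b then (z a - z b) ^ 2 else 0)) := by
    intro z
    have expand : z ⬝ᵥ ((r • (lapEq G x - (2 : ℝ) • lapNe G x)) *ᵥ z)
        = r * (z ⬝ᵥ (lapEq G x *ᵥ z) - 2 * (z ⬝ᵥ (lapNe G x *ᵥ z))) := by
      rw [Matrix.smul_mulVec, dotProduct_smul, Matrix.sub_mulVec,
        Matrix.smul_mulVec, dotProduct_sub, dotProduct_smul, smul_eq_mul, smul_eq_mul]
      try ring
    rw [expand]
    linear_combination r * stmt15_quad_eq G x z - 2 * r * stmt15_quad_ne G x z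
  constructor
  · constructor
    · -- NegDefOrth → all edges dissensus
      intro hneg i j hij heq
      obtain ⟨z, hzi, hzj, hedge⟩ := stmt15_exists_indicator G hT hij
      set c : ℝ := (∑ k, z k) / N with hc
      set w : Fin N → ℝ := fun k => z k - c with hw
      have hw1 : w i - w j = 1 := by simp only [hw]; rw [hzi, hzj]; ring
      have hwedge : ∀ a b, G.Adj a b → s(a, b) ≠ s(i, j) → w a = w b := by
        intro a b hab hne
        simp only [hw, hedge a b hab hne]
      obtain ⟨hwe, hwn⟩ := stmt15_consensus_vals G x hij heq w hw1 hwedge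
      have hwsum : ∑ k, w k = 0 := by
        simp only [hw]
        rw [Finset.sum_sub_distrib, Finset.sum_const, Finset.card_univ, Fintype.card_fin,
          nsmul_eq_mul, hc]
        field_simp
        ring
      have hwne : w ≠ 0 := by
        intro h
        have h1 : w i = 0 := by rw [h]; rfl
        have h2 : w j = 0 := by rw [h]; rfl
        rw [h1, h2] at hw1
        norm_num at hw1
      have hlt := hneg w hwne hwsum
      have h2 := hform w
      rw [hwe, hwn] at h2
      nlinarith
    · -- all edges dissensus → NegDefOrth
      intro hdis z hz hsum
      have h2 := hform z
      have hAeq0 : (∑ a, ∑ b, if G.Adj a b ∧ x a = x b then (z a - z b) ^ 2 else 0) = 0 := by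
        refine Finset.sum_eq_zero fun a _ => Finset.sum_eq_zero fun b _ => ?_
        exact if_neg (fun h => hdis a b h.1 h.2)
      have hnonneg : ∀ a b : Fin N,
          0 ≤ (if G.Adj a b ∧ x a ≠ x b then (z a - z b) ^ 2 else 0) := by
        intro a b; split_ifs <;> positivity
      have hAne_nonneg :
          0 ≤ ∑ a, ∑ b, if G.Adj a b ∧ x a ≠ x b then (z a - z b) ^ 2 else 0 :=
        Finset.sum_nonneg fun a _ => Finset.sum_nonneg fun b _ => hnonneg a b
      have hAne_pos :
          0 < ∑ a, ∑ b, if G.Adj a b ∧ x a ≠ x b then (z a - z b) ^ 2 else 0 := by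
        rcases lt_or_eq_of_le hAne_nonneg with h | h
        · exact h
        exfalso
        have hall : ∀ a b, G.Adj a b → z a = z b := by
          intro a b hab
          have h1 := (Finset.sum_eq_zero_iff_of_nonneg
            (fun a _ => Finset.sum_nonneg fun b _ => hnonneg a b)).mp h.symm a (Finset.mem_univ a)
          have h3 := (Finset.sum_eq_zero_iff_of_nonneg
            (fun b _ => hnonneg a b)).mp h1 b (Finset.mem_univ b)
          rw [if_pos ⟨hab, hdis a b hab⟩] at h3
          have h4 := (pow_eq_zero_iff two_ne_zero).mp h3
          linarith [sub_eq_zero.mp h4]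
        have hconst := stmt15_const_of_edges G hT.isConnected z hall
        have i0 : Fin N := ⟨0, by omega⟩
        have hsum' : ∑ k, z k = (N : ℝ) * z i0 := by
          rw [Finset.sum_congr rfl (fun k _ => hconst k i0), Finset.sum_const,
            Finset.card_univ, Fintype.card_fin, nsmul_eq_mul]
        have hz0 : z i0 = 0 := by
          rw [hsum'] at hsum
          exact (mul_eq_zero.mp hsum).resolve_left hNR.ne'
        exact hz (funext fun k => (hconst k i0).trans hz0)
      rw [hAeq0] at h2
      nlinarith
  · -- consensus edge → positive eigenvalue
    rintro ⟨i, j, hij, heq⟩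
    obtain ⟨z, hzi, hzj, hedge⟩ := stmt15_exists_indicator G hT hij
    have hz1 : z i - z j = 1 := by rw [hzi, hzj]; ring
    obtain ⟨hze, hzn⟩ := stmt15_consensus_vals G x hij heq z hz1 hedge
    refine stmt15_pos_eig_of_pos_form _ (stmt15_M_symm G x r) z ?_
    have h2 := hform z
    rw [hze, hzn] at h2
    nlinarith
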